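/- (Approximate lower Hermite–Hadamard for Lebesgue measure.) Let D be a convex subset of a real linear space and f : D → ℝ hemi-Lebesgue integrable, satisfying f((1−t)x+ty) ≤ (1−t)f(x) + t f(y) + η_{x,y}(t) for all x ≠ y in D and t ∈ [0,1], where I(x,y) := ∫_{1/2}^{1} ∫_{0}^{1/2} (t''−t')·η_{(1−t')x+t'y, (1−t'')x+t''y}((1/2−t')/(t''−t')) dt' dt'' exists in [−∞,∞]. Then f((x+y)/2) ≤ ∫₀¹ f((1−t)x+ty) dt + 8·I(x,y) for all x ≠ y in D. -/

import Mathlib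

open MeasureTheory intervalIntegral

/-- Corollary: approximate lower Hermite–Hadamard for the Lebesgue
measure: `f((x+y)/2) ≤ ∫₀¹ f((1−t)x+ty) dt + 8·I(x,y)` where
`I(x,y) = ∫_{1/2}^1 ∫_0^{1/2} (t''−t') η_{(1−t')x+t'y,(1−t'')x+t''y}((1/2−t')/(t''−t')) dt' dt''`. -/
theorem approx_lower_hh_lebesgue
    {X : Type*} [AddCommGroup X] [Module ℝ X]
    (D : Set X) (hD : Convex ℝ D)
    (f : X → ℝ) (η : X → X → ℝ → ℝ)
    -- hemi-Lebesgue integrability of f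
    (hf : ∀ x ∈ D, ∀ y ∈ D,
        IntervalIntegrable (fun t => f ((1 - t) • x + t • y)) volume 0 1)
    -- approximate convexity
    (hconv : ∀ x ∈ D, ∀ y ∈ D, x ≠ y → ∀ t ∈ Set.Icc (0:ℝ) 1,
        f ((1 - t) • x + t • y) ≤ (1 - t) * f x + t * f y + η x y t)
    -- existence (integrability) of the double error integral I(x,y)
    (hη₁ : ∀ x ∈ D, ∀ y ∈ D, x ≠ y → ∀ t'' ∈ Set.Ioc (1/2 : ℝ) 1,
        IntervalIntegrable
          (fun t' => (t'' - t') *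
            η ((1 - t') • x + t' • y) ((1 - t'') • x + t'' • y)
              ((1/2 - t') / (t'' - t')))
          volume 0 (1/2))
    (hη₂ : ∀ x ∈ D, ∀ y ∈ D, x ≠ y →
        IntervalIntegrable
          (fun t'' => ∫ t' in (0:ℝ)..(1/2), (t'' - t') *
            η ((1 - t') • x + t' • y) ((1 - t'') • x + t'' • y)
              ((1/2 - t') / (t'' - t')))
          volume (1/2) 1) :
    ∀ x ∈ D, ∀ y ∈ D, x ≠ y →
      f ((2⁻¹ : ℝ) • (x + y)) ≤
        (∫ t in (0:ℝ)..1, f ((1 - t) • x + t • y)) +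
        8 * ∫ t'' in (1/2:ℝ)..1, ∫ t' in (0:ℝ)..(1/2), (t'' - t') *
            η ((1 - t') • x + t' • y) ((1 - t'') • x + t'' • y)
              ((1/2 - t') / (t'' - t')) := by
  intro x hx y hy hxy
  set g : ℝ → ℝ := fun t => f ((1 - t) • x + t • y) with hgdef
  set m : X := (2⁻¹ : ℝ) • (x + y) with hmdef
  have hgint : IntervalIntegrable g volume 0 1 := hf x hx y hy
  have hsub1 : Set.uIcc (0:ℝ) (1/2) ⊆ Set.uIcc (0:ℝ) 1 := by
    rw [Set.uIcc_of_le (by norm_num : (0:ℝ) ≤ 1/2), Set.uIcc_of_le (by norm_num : (0:ℝ) ≤ 1)]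
    exact Set.Icc_subset_Icc le_rfl (by norm_num)
  have hsub2 : Set.uIcc (1/2:ℝ) 1 ⊆ Set.uIcc (0:ℝ) 1 := by
    rw [Set.uIcc_of_le (by norm_num : (1/2:ℝ) ≤ 1), Set.uIcc_of_le (by norm_num : (0:ℝ) ≤ 1)]
    exact Set.Icc_subset_Icc (by norm_num) le_rfl
  have hgA : IntervalIntegrable g volume 0 (1/2) := hgint.mono_set hsub1
  have hgB : IntervalIntegrable g volume (1/2) 1 := hgint.mono_set hsub2
  set A : ℝ := ∫ t in (0:ℝ)..(1/2), g t with hAdef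
  set B : ℝ := ∫ t in (1/2:ℝ)..1, g t with hBdef
  set E : ℝ → ℝ := fun t'' => ∫ t' in (0:ℝ)..(1/2), (t'' - t') *
      η ((1 - t') • x + t' • y) ((1 - t'') • x + t'' • y) ((1/2 - t') / (t'' - t'))
    with hEdef
  -- key inequality after inner integration
  have key : ∀ t'' ∈ Set.Ioc (1/2:ℝ) 1,
      f m * (t''/2 - 1/8) ≤ (t'' - 1/2) * A + (1/8) * g t'' + E t'' := by
    intro t'' ht''c
    obtain ⟨ht''l, ht''r⟩ := ht''c
    have inner : ∀ t' ∈ Set.Icc (0:ℝ) (1/2),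
        (t'' - t') * f m ≤ (t'' - 1/2) * g t' + (1/2 - t') * g t'' +
          (t'' - t') * η ((1 - t') • x + t' • y) ((1 - t'') • x + t'' • y)
            ((1/2 - t') / (t'' - t')) := by
      intro t' ht'c
      obtain ⟨ht'l, ht'r⟩ := ht'c
      have hd : (0:ℝ) < t'' - t' := by linarith
      set s : ℝ := (1/2 - t') / (t'' - t') with hsdef
      have hds : (t'' - t') * s = 1/2 - t' := by
        rw [hsdef]; field_simp
      have hs0 : 0 ≤ s := div_nonneg (by linarith) hd.le
      have hs1 : s ≤ 1 := by rw [hsdef, div_le_one hd]; linarith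
      have hu' : (1 - t') • x + t' • y ∈ D :=
        hD hx hy (by linarith) ht'l (by ring)
      have hu'' : (1 - t'') • x + t'' • y ∈ D :=
        hD hx hy (by linarith) (by linarith) (by ring)
      have hne : (1 - t') • x + t' • y ≠ (1 - t'') • x + t'' • y := by
        intro h
        apply hxy
        have h2 : (t'' - t') • (x - y) =
            ((1 - t') • x + t' • y) - ((1 - t'') • x + t'' • y) := by
          module
        rw [h, sub_self] at h2
        rcases smul_eq_zero.mp h2 with h3 | h3
        · exact absurd h3 (ne_of_gt hd)
        · exact sub_eq_zero.mp h3
      have hc := hconv _ hu' _ hu'' hne s ⟨hs0, hs1⟩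
      have hmid : (1 - s) • ((1 - t') • x + t' • y) + s • ((1 - t'') • x + t'' • y) = m := by
        have h1 : (2⁻¹ : ℝ) = (1 - s) * (1 - t') + s * (1 - t'') := by
          linear_combination hds
        have h2 : (2⁻¹ : ℝ) = (1 - s) * t' + s * t'' := by
          linear_combination -hds
        calc (1 - s) • ((1 - t') • x + t' • y) + s • ((1 - t'') • x + t'' • y)
            = ((1 - s) * (1 - t') + s * (1 - t'')) • x + ((1 - s) * t' + s * t'') • y := by
              module
          _ = (2⁻¹ : ℝ) • x + (2⁻¹ : ℝ) • y := by rw [← h1, ← h2]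
          _ = m := by rw [hmdef, smul_add]
      rw [hmid] at hc
      have hmul := mul_le_mul_of_nonneg_left hc hd.le
      calc (t'' - t') * f m
          ≤ (t'' - t') * ((1 - s) * f ((1 - t') • x + t' • y) +
              s * f ((1 - t'') • x + t'' • y) +
              η ((1 - t') • x + t' • y) ((1 - t'') • x + t'' • y) s) := hmul
        _ = (t'' - 1/2) * g t' + (1/2 - t') * g t'' +
              (t'' - t') * η ((1 - t') • x + t' • y) ((1 - t'') • x + t'' • y) s := by
            simp only [hgdef]
            linear_combination
              (f ((1 - t'') • x + t'' • y) - f ((1 - t') • x + t' • y)) * hds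
    have lhsInt : IntervalIntegrable (fun t' => (t'' - t') * f m) volume 0 (1/2) :=
      ((continuous_const.sub continuous_id).mul continuous_const).intervalIntegrable _ _
    have r1 : IntervalIntegrable (fun t' => (t'' - 1/2) * g t') volume 0 (1/2) :=
      hgA.const_mul _
    have r2 : IntervalIntegrable (fun t' => (1/2 - t') * g t'') volume 0 (1/2) :=
      ((continuous_const.sub continuous_id).mul continuous_const).intervalIntegrable _ _
    have r3 := hη₁ x hx y hy hxy t'' ⟨ht''l, ht''r⟩
    have hmono := intervalIntegral.integral_mono_on (by norm_num : (0:ℝ) ≤ 1/2)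
      lhsInt ((r1.add r2).add r3) inner
    have e1 : ∫ t' in (0:ℝ)..(1/2), (t'' - t') = t''/2 - 1/8 := by
      rw [intervalIntegral.integral_sub intervalIntegrable_const
        intervalIntegral.intervalIntegrable_id]
      norm_num [integral_id]
      ring
    have e2 : ∫ t' in (0:ℝ)..(1/2), (1/2 - t') = (1/8 : ℝ) := by
      rw [intervalIntegral.integral_sub intervalIntegrable_const
        intervalIntegral.intervalIntegrable_id]
      norm_num [integral_id]
    have c1 : ∫ t' in (0:ℝ)..(1/2), (t'' - t') * f m = f m * (t''/2 - 1/8) := by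
      rw [intervalIntegral.integral_mul_const, e1]; ring
    have c2 : (∫ t' in (0:ℝ)..(1/2), ((t'' - 1/2) * g t' + (1/2 - t') * g t'' +
        (t'' - t') * η ((1 - t') • x + t' • y) ((1 - t'') • x + t'' • y)
          ((1/2 - t') / (t'' - t')))) = (t'' - 1/2) * A + (1/8) * g t'' + E t'' := by
      rw [intervalIntegral.integral_add (r1.add r2) r3,
        intervalIntegral.integral_add r1 r2,
        intervalIntegral.integral_const_mul, intervalIntegral.integral_mul_const, e2]
    rw [c1, c2] at hmono
    exact hmono
  -- outer integration
  have Lint : IntervalIntegrable (fun t'' => f m * (t''/2 - 1/8)) volume (1/2) 1 :=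
    (continuous_const.mul ((continuous_id.div_const 2).sub continuous_const)).intervalIntegrable _ _
  have R1 : IntervalIntegrable (fun t'' => (t'' - 1/2) * A) volume (1/2) 1 :=
    ((continuous_id.sub continuous_const).mul continuous_const).intervalIntegrable _ _
  have R2 : IntervalIntegrable (fun t'' => (1/8 : ℝ) * g t'') volume (1/2) 1 :=
    hgB.const_mul _
  have R3 : IntervalIntegrable E volume (1/2) 1 := hη₂ x hx y hy hxy
  have aemono : (fun t'' => f m * (t''/2 - 1/8)) ≤ᵐ[volume.restrict (Set.Icc (1/2:ℝ) 1)]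
      fun t'' => (t'' - 1/2) * A + (1/8) * g t'' + E t'' := by
    have h1 : ∀ᵐ t'' ∂(volume.restrict (Set.Icc (1/2:ℝ) 1)), t'' ∈ Set.Icc (1/2:ℝ) 1 :=
      ae_restrict_mem measurableSet_Icc
    have h2 : ∀ᵐ (t : ℝ) ∂(volume.restrict (Set.Icc (1/2:ℝ) 1)), t ≠ 1/2 := by
      refine ae_restrict_of_ae ?_
      rw [ae_iff]
      have : {a : ℝ | ¬ a ≠ 1/2} = {(1/2 : ℝ)} := by ext a; simp
      rw [this]
      exact Real.volume_singleton
    filter_upwards [h1, h2] with t'' ht hne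
    exact key t'' ⟨lt_of_le_of_ne ht.1 (Ne.symm hne), ht.2⟩
  have hmono2 := intervalIntegral.integral_mono_ae_restrict (by norm_num : (1/2:ℝ) ≤ 1)
    Lint ((R1.add R2).add R3) aemono
  have f1 : ∫ t'' in (1/2:ℝ)..1, (t''/2 - 1/8) = (1/8 : ℝ) := by
    have hh : IntervalIntegrable (fun t : ℝ => t / 2) volume (1/2) 1 :=
      (continuous_id.div_const 2).intervalIntegrable _ _
    rw [intervalIntegral.integral_sub hh intervalIntegrable_const,
      intervalIntegral.integral_div]
    norm_num [integral_id]
  have f2 : ∫ t'' in (1/2:ℝ)..1, (t'' - 1/2) = (1/8 : ℝ) := by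
    rw [intervalIntegral.integral_sub intervalIntegral.intervalIntegrable_id
      intervalIntegrable_const]
    norm_num [integral_id]
  have cL : ∫ t'' in (1/2:ℝ)..1, f m * (t''/2 - 1/8) = f m * (1/8) := by
    rw [intervalIntegral.integral_const_mul, f1]
  have cR : (∫ t'' in (1/2:ℝ)..1, ((t'' - 1/2) * A + (1/8) * g t'' + E t''))
      = (1/8) * A + (1/8) * B + ∫ t'' in (1/2:ℝ)..1, E t'' := by
    rw [intervalIntegral.integral_add (R1.add R2) R3,
      intervalIntegral.integral_add R1 R2,
      intervalIntegral.integral_mul_const, intervalIntegral.integral_const_mul, f2, hBdef]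
  rw [cL, cR] at hmono2
  have hAB : A + B = ∫ t in (0:ℝ)..1, g t := by
    rw [hAdef, hBdef]
    exact intervalIntegral.integral_add_adjacent_intervals hgA hgB
  have : (∫ t in (0:ℝ)..1, g t) = A + B := hAB.symm
  linarith [hmono2]
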